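/- Let G be a finite connected simple graph of order n > 2. Then ldim_f(G) = 1 if and only if G is bipartite. -/

import Mathlib

open Finset

/-- A local resolving function of a graph `G`: a map `ζ : V → [0,1]` such that for every
pair of adjacent vertices `u v`, the sum of `ζ` over the local resolving neighborhood
`R{u,v} = {w : d(w,u) ≠ d(w,v)}` is at least `1`. -/
def IsLocalResolvingFunction {V : Type*} [Fintype V] (G : SimpleGraph V) (ζ : V → ℝ) : Prop :=
  (∀ w, ζ w ∈ Set.Icc (0 : ℝ) 1) ∧
    ∀ u v, G.Adj u v →
      1 ≤ ∑ w ∈ Finset.univ.filter (fun w => G.dist w u ≠ G.dist w v), ζ w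

/-- The local fractional metric dimension of `G`: the minimum of `∑ v, ζ v` over all
local resolving functions `ζ` of `G`. -/
noncomputable def ldimf {V : Type*} [Fintype V] (G : SimpleGraph V) : ℝ :=
  sInf {s : ℝ | ∃ ζ : V → ℝ, IsLocalResolvingFunction G ζ ∧ s = ∑ v, ζ v}

/-- Along a walk in a `2`-colored graph, parity of the length matches whether the colors
of the endpoints agree. -/
lemma parity_walk {V : Type*} {G : SimpleGraph V} (C : G.Coloring (Fin 2)) {a b : V}
    (p : G.Walk a b) : Even p.length ↔ C a = C b := by
  induction p with
  | nil => simp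
  | @cons a c b h p ih =>
    have hac : C a ≠ C c := C.valid h
    have key : ∀ x y z : Fin 2, x ≠ z → ((x = y) ↔ ¬ (z = y)) := by decide
    simp only [SimpleGraph.Walk.length_cons, Nat.even_add_one, ih]
    rw [key (C a) (C b) (C c) hac]

/-- In a connected bipartite graph, every vertex distinguishes every edge. -/
lemma bip_dist_ne {V : Type*} {G : SimpleGraph V} (hconn : G.Connected)
    (C : G.Coloring (Fin 2)) {u v : V} (huv : G.Adj u v) (w : V) :
    G.dist w u ≠ G.dist w v := by
  intro h
  obtain ⟨p, hp⟩ := (hconn w u).exists_walk_length_eq_dist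
  obtain ⟨q, hq⟩ := (hconn w v).exists_walk_length_eq_dist
  have h1 : Even (G.dist w u) ↔ C w = C u := by rw [← hp]; exact parity_walk C p
  have h2 : Even (G.dist w v) ↔ C w = C v := by rw [← hq]; exact parity_walk C q
  rw [h] at h1
  have h3 : (C w = C u) ↔ (C w = C v) := by rw [← h1, ← h2]
  have key : ∀ x y z : Fin 2, ((x = y) ↔ (x = z)) → y = z := by decide
  exact C.valid huv (key _ _ _ h3)

/-- In a connected non-bipartite graph, every vertex fails to distinguish some edge. -/
lemma exists_edge_eq_dist {V : Type*} {G : SimpleGraph V} (hconn : G.Connected)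
    (hnb : ¬ G.Colorable 2) (x : V) :
    ∃ u v, G.Adj u v ∧ G.dist x u = G.dist x v := by
  by_contra h
  push_neg at h
  apply hnb
  refine ⟨SimpleGraph.Coloring.mk (fun v => (⟨G.dist x v % 2, Nat.mod_lt _ two_pos⟩ : Fin 2)) ?_⟩
  intro u v huv hcol
  have hne : G.dist x u ≠ G.dist x v := h u v huv
  have h1 : G.dist u v = 1 := SimpleGraph.dist_eq_one_iff_adj.mpr huv
  have h2 : G.dist v u = 1 := SimpleGraph.dist_eq_one_iff_adj.mpr huv.symm
  have t1 : G.dist x u ≤ G.dist x v + G.dist v u := hconn.dist_triangle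
  have t2 : G.dist x v ≤ G.dist x u + G.dist u v := hconn.dist_triangle
  have hmod : G.dist x u % 2 = G.dist x v % 2 := congrArg Fin.val hcol
  omega

/-- For a finite connected simple graph `G` of order `n > 2`, the local fractional metric
dimension of `G` equals `1` if and only if `G` is bipartite (i.e. `2`-colorable). -/
theorem ldimf_eq_one_iff_bipartite {V : Type*} [Fintype V] (G : SimpleGraph V)
    (hconn : G.Connected) (hcard : 2 < Fintype.card V) :
    ldimf G = 1 ↔ G.Colorable 2 := by
  classical
  set S : Set ℝ := {s : ℝ | ∃ ζ : V → ℝ, IsLocalResolvingFunction G ζ ∧ s = ∑ v, ζ v} with hS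
  have hn : (2 : ℝ) < Fintype.card V := by exact_mod_cast hcard
  -- there is at least one edge
  obtain ⟨u₀, v₀, huv₀⟩ : ∃ u v, G.Adj u v := by
    obtain ⟨u, v, huv⟩ := Fintype.exists_pair_of_one_lt_card (α := V) (by omega)
    obtain ⟨p⟩ := hconn u v
    cases p with
    | nil => exact absurd rfl huv
    | cons h _ => exact ⟨_, _, h⟩
  -- every element of S is at least 1
  have hlb : ∀ s ∈ S, (1 : ℝ) ≤ s := by
    rintro s ⟨ζ, ⟨hmem, hres⟩, rfl⟩
    calc (1 : ℝ) ≤ ∑ w ∈ Finset.univ.filter (fun w => G.dist w u₀ ≠ G.dist w v₀), ζ w :=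
          hres u₀ v₀ huv₀
      _ ≤ ∑ v, ζ v := Finset.sum_le_sum_of_subset_of_nonneg (Finset.filter_subset _ _)
          (fun i _ _ => (hmem i).1)
  constructor
  · -- ldimf = 1 → bipartite
    intro h1
    by_contra hnb
    -- every element of S is at least n/(n-1) > 1
    have hlb2 : ∀ s ∈ S, (Fintype.card V : ℝ) / (Fintype.card V - 1) ≤ s := by
      rintro s ⟨ζ, ⟨hmem, hres⟩, rfl⟩
      set T : ℝ := ∑ v, ζ v with hT
      have key : ∀ x : V, ζ x ≤ T - 1 := by
        intro x
        obtain ⟨u, v, huv, hd⟩ := exists_edge_eq_dist hconn hnb x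
        have hsub : Finset.univ.filter (fun w => G.dist w u ≠ G.dist w v) ⊆
            Finset.univ.erase x := by
          intro w hw
          simp only [Finset.mem_filter] at hw
          refine Finset.mem_erase.mpr ⟨?_, Finset.mem_univ _⟩
          rintro rfl; exact hw.2 hd
        have h2 : (1 : ℝ) ≤ ∑ w ∈ Finset.univ.erase x, ζ w :=
          le_trans (hres u v huv)
            (Finset.sum_le_sum_of_subset_of_nonneg hsub (fun i _ _ => (hmem i).1))
        have h3 : ∑ w ∈ Finset.univ.erase x, ζ w = T - ζ x := by
          rw [hT, ← Finset.sum_erase_add Finset.univ ζ (Finset.mem_univ x)]; ring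
        linarith [h3 ▸ h2]
      have hsum : T ≤ (Fintype.card V : ℝ) * (T - 1) := by
        calc T = ∑ x : V, ζ x := hT
          _ ≤ ∑ _x : V, (T - 1) := Finset.sum_le_sum (fun x _ => key x)
          _ = (Fintype.card V : ℝ) * (T - 1) := by
              rw [Finset.sum_const, Finset.card_univ, nsmul_eq_mul]
      rw [div_le_iff₀ (by linarith)]
      nlinarith
    have hne1 : ldimf G ≠ 1 := by
      rcases Set.eq_empty_or_nonempty S with hE | hNE
      · rw [ldimf, ← hS, hE, Real.sInf_empty]; norm_num
      · have : (Fintype.card V : ℝ) / (Fintype.card V - 1) ≤ ldimf G :=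
          le_csInf hNE hlb2
        have hgt : (1 : ℝ) < (Fintype.card V : ℝ) / (Fintype.card V - 1) := by
          rw [lt_div_iff₀ (by linarith)]; linarith
        intro hc; rw [hc] at this; linarith
    exact hne1 h1
  · -- bipartite → ldimf = 1
    rintro ⟨C⟩
    have hmem1 : (1 : ℝ) ∈ S := by
      refine ⟨fun _ => (Fintype.card V : ℝ)⁻¹, ⟨?_, ?_⟩, ?_⟩
      · intro w
        constructor
        · positivity
        · rw [inv_le_one_iff₀]; right; linarith
      · intro u v huv
        have hfil : Finset.univ.filter (fun w => G.dist w u ≠ G.dist w v) = Finset.univ := by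
          apply Finset.filter_true_of_mem
          intro w _
          exact bip_dist_ne hconn C huv w
        rw [hfil, Finset.sum_const, Finset.card_univ, nsmul_eq_mul,
          mul_inv_cancel₀ (by linarith)]
      · rw [Finset.sum_const, Finset.card_univ, nsmul_eq_mul,
          mul_inv_cancel₀ (by linarith)]
    exact le_antisymm (csInf_le ⟨1, hlb⟩ hmem1) (le_csInf ⟨1, hmem1⟩ hlb)
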